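/- For the disjunction case of the Presburger encoding: for any bag languages L1, L2 and natural n, (L1 ∪ L2)^n = ⋃_{n1 + n2 = n} L1^{n1} ⊎ L2^{n2}. -/
import Mathlib


def bagLangUnion {Δ : Type} (L1 L2 : Set (Δ → ℕ)) : Set (Δ → ℕ) :=
  {w | ∃ w1 ∈ L1, ∃ w2 ∈ L2, w = w1 + w2}

def bagLangPow {Δ : Type} (L : Set (Δ → ℕ)) : ℕ → Set (Δ → ℕ)
  | 0 => {0}
  | i + 1 => bagLangUnion L (bagLangPow L i)

/-- (L1 ∪ L2)^n = ⋃_{n1+n2=n} L1^{n1} ⊎ L2^{n2}. -/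
theorem bagLangPow_set_union {Δ : Type} (L1 L2 : Set (Δ → ℕ)) (n : ℕ) :
    bagLangPow (L1 ∪ L2) n =
      {w | ∃ n1 n2, n1 + n2 = n ∧ w ∈ bagLangUnion (bagLangPow L1 n1) (bagLangPow L2 n2)} := by
  induction n with
  | zero =>
    ext w
    constructor
    · intro hw
      simp only [bagLangPow, Set.mem_singleton_iff] at hw
      exact ⟨0, 0, rfl, 0, rfl, 0, rfl, by simp [hw]⟩
    · rintro ⟨n1, n2, hn, w1, h1, w2, h2, rfl⟩
      obtain ⟨rfl, rfl⟩ : n1 = 0 ∧ n2 = 0 := by omega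
      simp [bagLangPow] at h1 h2 ⊢
      simp [h1, h2]
  | succ n ih =>
    ext w
    constructor
    · rintro ⟨a, ha, b, hb, rfl⟩
      rw [ih] at hb
      obtain ⟨n1, n2, hn, w1, h1, w2, h2, rfl⟩ := hb
      rcases ha with ha | ha
      · exact ⟨n1 + 1, n2, by omega, a + w1, ⟨a, ha, w1, h1, rfl⟩, w2, h2, by ring⟩
      · exact ⟨n1, n2 + 1, by omega, w1, h1, a + w2, ⟨a, ha, w2, h2, rfl⟩, by ring⟩
    · rintro ⟨n1, n2, hn, w1, h1, w2, h2, rfl⟩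
      rcases n1 with _ | m1
      · -- n1 = 0, so n2 = n+1
        obtain rfl : n2 = n + 1 := by omega
        simp [bagLangPow] at h1
        obtain ⟨a, ha, b, hb, rfl⟩ := h2
        refine ⟨a, Or.inr ha, w1 + b, ?_, by ring⟩
        rw [ih]
        exact ⟨0, n, by omega, w1, h1, b, hb, rfl⟩
      · obtain ⟨a, ha, b, hb, rfl⟩ := h1
        refine ⟨a, Or.inl ha, b + w2, ?_, by ring⟩
        rw [ih]
        exact ⟨m1, n2, by omega, b, hb, w2, h2, rfl⟩
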